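/- Let U ⊆ ℝ^d be open, and let W : U → Matrix (Fin n) (Fin r) ℂ, G_μ : U → Matrix (Fin n) (Fin n) ℂ (Hermitian valued), and A_μ : U → Matrix (Fin r) (Fin r) ℂ (anti-Hermitian valued) be twice continuously differentiable maps satisfying the horizontal-lift equation ∂_μ W = G_μ W − W (A_μ)ᵀ on U for every μ. Define F_{μν} := ∂_μ A_ν − ∂_ν A_μ + [A_μ, A_ν] and F̃_{μν} := ∂_μ G_ν − ∂_ν G_μ − [G_μ, G_ν]. Then at every point of U and for all μ, ν one has F̃_{μν} W = W (F_{μν})ᵀ. -/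

import Mathlib

open Matrix

/-- The partial derivative `∂_μ` of a matrix-valued function on `ℝ^d`, taken entrywise. -/
noncomputable def matPDeriv {d n m : ℕ} (μ : Fin d)
    (f : (Fin d → ℝ) → Matrix (Fin n) (Fin m) ℂ) (x : Fin d → ℝ) :
    Matrix (Fin n) (Fin m) ℂ :=
  Matrix.of fun i j => fderiv ℝ (fun y => f y i j) x (Pi.single μ 1)

/-- Symmetry of second directional derivatives for a scalar `C²` function. -/
lemma scalar_symm {d : ℕ} {f : (Fin d → ℝ) → ℂ} {x : Fin d → ℝ}
    (hf : ContDiffAt ℝ 2 f x) (v w : Fin d → ℝ) :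
    fderiv ℝ (fun y => fderiv ℝ f y v) x w = fderiv ℝ (fun y => fderiv ℝ f y w) x v := by
  have h1 : DifferentiableAt ℝ (fderiv ℝ f) x := by
    have h := hf.fderiv_right (m := 1) (by norm_num)
    exact h.differentiableAt one_ne_zero
  have hsymm : IsSymmSndFDerivAt ℝ f x := hf.isSymmSndFDerivAt (by simp)
  have e : ∀ u : Fin d → ℝ, fderiv ℝ (fun y => fderiv ℝ f y u) x
      = (fderiv ℝ (fderiv ℝ f) x).flip u := by
    intro u
    have := fderiv_clm_apply (c := fderiv ℝ f) (u := fun _ => u) h1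
      (differentiableAt_const u)
    simpa using this
  rw [e v, e w]
  simpa using (hsymm w v)

/-- Locality of `matPDeriv`. -/
lemma matPDeriv_congr {d n m : ℕ} {U : Set (Fin d → ℝ)} (hU : IsOpen U)
    {f g : (Fin d → ℝ) → Matrix (Fin n) (Fin m) ℂ} {x : Fin d → ℝ} (hx : x ∈ U)
    (h : ∀ y ∈ U, f y = g y) (μ : Fin d) : matPDeriv μ f x = matPDeriv μ g x := by
  ext i j
  show fderiv ℝ (fun y => f y i j) x (Pi.single μ 1)
      = fderiv ℝ (fun y => g y i j) x (Pi.single μ 1)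
  have hev : (fun y => f y i j) =ᶠ[nhds x] (fun y => g y i j) := by
    filter_upwards [hU.mem_nhds hx] with y hy
    rw [h y hy]
  rw [hev.fderiv_eq]

lemma matPDeriv_sub {d n m : ℕ} {f g : (Fin d → ℝ) → Matrix (Fin n) (Fin m) ℂ}
    {x : Fin d → ℝ} (hf : ∀ i j, DifferentiableAt ℝ (fun y => f y i j) x)
    (hg : ∀ i j, DifferentiableAt ℝ (fun y => g y i j) x) (μ : Fin d) :
    matPDeriv μ (fun y => f y - g y) x = matPDeriv μ f x - matPDeriv μ g x := by
  ext i j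
  show fderiv ℝ (fun y => f y i j - g y i j) x (Pi.single μ 1) = _
  rw [fderiv_fun_sub (hf i j) (hg i j)]
  rfl

lemma matPDeriv_mul {d n m k : ℕ} {f : (Fin d → ℝ) → Matrix (Fin n) (Fin m) ℂ}
    {g : (Fin d → ℝ) → Matrix (Fin m) (Fin k) ℂ}
    {x : Fin d → ℝ} (hf : ∀ i j, DifferentiableAt ℝ (fun y => f y i j) x)
    (hg : ∀ i j, DifferentiableAt ℝ (fun y => g y i j) x) (μ : Fin d) :
    matPDeriv μ (fun y => f y * g y) x
      = matPDeriv μ f x * g x + f x * matPDeriv μ g x := by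
  ext i j
  show fderiv ℝ (fun y => (f y * g y) i j) x (Pi.single μ 1) = _
  have hfun : (fun y => (f y * g y) i j)
      = fun y => ∑ l, f y i l * g y l j := by
    funext y; simp [Matrix.mul_apply]
  rw [hfun, fderiv_fun_sum (A := fun l y => f y i l * g y l j) (fun l _ => (hf i l).mul (hg l j))]
  simp only [ContinuousLinearMap.coe_sum', Finset.sum_apply]
  have : ∀ l, fderiv ℝ (fun y => f y i l * g y l j) x (Pi.single μ 1)
      = fderiv ℝ (fun y => f y i l) x (Pi.single μ 1) * g x l j
        + f x i l * fderiv ℝ (fun y => g y l j) x (Pi.single μ 1) := by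
    intro l
    rw [fderiv_fun_mul (hf i l) (hg l j)]
    simp only [ContinuousLinearMap.add_apply, ContinuousLinearMap.smul_apply, smul_eq_mul]
    ring
  rw [Finset.sum_congr rfl fun l _ => this l]
  simp [Matrix.add_apply, Matrix.mul_apply, matPDeriv, Finset.sum_add_distrib]

lemma matPDeriv_transpose {d n m : ℕ} {f : (Fin d → ℝ) → Matrix (Fin n) (Fin m) ℂ}
    {x : Fin d → ℝ} (μ : Fin d) :
    matPDeriv μ (fun y => (f y)ᵀ) x = (matPDeriv μ f x)ᵀ := rfl

/-- For a twice continuously differentiable purification amplitude `W`,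
Hermitian `G_μ` and anti-Hermitian `A_μ` satisfying the horizontal-lift equation
`∂_μ W = G_μ W − W (A_μ)ᵀ` on an open set `U`, the curvature
`F_{μν} = ∂_μ A_ν − ∂_ν A_μ + [A_μ, A_ν]` and the dual curvature
`F̃_{μν} = ∂_μ G_ν − ∂_ν G_μ − [G_μ, G_ν]` satisfy `F̃_{μν} W = W (F_{μν})ᵀ` on `U`. -/
theorem dual_curvature_intertwines {d n r : ℕ} (U : Set (Fin d → ℝ)) (hU : IsOpen U)
    (W : (Fin d → ℝ) → Matrix (Fin n) (Fin r) ℂ)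
    (G : Fin d → (Fin d → ℝ) → Matrix (Fin n) (Fin n) ℂ)
    (A : Fin d → (Fin d → ℝ) → Matrix (Fin r) (Fin r) ℂ)
    (hWC2 : ∀ i j, ContDiffOn ℝ 2 (fun x => W x i j) U)
    (hGC2 : ∀ μ i j, ContDiffOn ℝ 2 (fun x => G μ x i j) U)
    (hAC2 : ∀ μ i j, ContDiffOn ℝ 2 (fun x => A μ x i j) U)
    (hGHerm : ∀ μ, ∀ x ∈ U, (G μ x).IsHermitian)
    (hAAnti : ∀ μ, ∀ x ∈ U, (A μ x)ᴴ = -(A μ x))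
    (hlift : ∀ μ, ∀ x ∈ U, matPDeriv μ W x = G μ x * W x - W x * (A μ x)ᵀ) :
    ∀ x ∈ U, ∀ μ ν : Fin d,
      (matPDeriv μ (G ν) x - matPDeriv ν (G μ) x
          - (G μ x * G ν x - G ν x * G μ x)) * W x
      = W x * (matPDeriv μ (A ν) x - matPDeriv ν (A μ) x
          + (A μ x * A ν x - A ν x * A μ x))ᵀ := by
  intro x hx μ ν
  have hxnhds := hU.mem_nhds hx
  have hWd : ∀ i j, DifferentiableAt ℝ (fun y => W y i j) x := fun i j =>
    ((hWC2 i j).contDiffAt hxnhds).differentiableAt two_ne_zero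
  have hGd : ∀ κ i j, DifferentiableAt ℝ (fun y => G κ y i j) x := fun κ i j =>
    ((hGC2 κ i j).contDiffAt hxnhds).differentiableAt two_ne_zero
  have hAd : ∀ κ i j, DifferentiableAt ℝ (fun y => A κ y i j) x := fun κ i j =>
    ((hAC2 κ i j).contDiffAt hxnhds).differentiableAt two_ne_zero
  have hAdT : ∀ κ i j, DifferentiableAt ℝ (fun y => (A κ y)ᵀ i j) x := fun κ i j =>
    hAd κ j i
  -- second derivative expansion
  have step : ∀ α β : Fin d, matPDeriv α (matPDeriv β W) x
      = matPDeriv α (G β) x * W x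
        + G β x * (G α x * W x - W x * (A α x)ᵀ)
        - ((G α x * W x - W x * (A α x)ᵀ) * (A β x)ᵀ
          + W x * (matPDeriv α (A β) x)ᵀ) := by
    intro α β
    have h1 : matPDeriv α (matPDeriv β W) x
        = matPDeriv α (fun y => G β y * W y - W y * (A β y)ᵀ) x :=
      matPDeriv_congr hU hx (fun y hy => hlift β y hy) α
    rw [h1,
      matPDeriv_sub (f := fun y => G β y * W y) (g := fun y => W y * (A β y)ᵀ)
        (fun i j => by
          have h : (fun y => (G β y * W y) i j) = fun y => ∑ l, G β y i l * W y l j := by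
            funext y; simp [Matrix.mul_apply]
          rw [h]
          exact DifferentiableAt.fun_sum fun l _ => (hGd β i l).mul (hWd l j))
        (fun i j => by
          have h : (fun y => (W y * (A β y)ᵀ) i j)
              = fun y => ∑ l, W y i l * (A β y)ᵀ l j := by
            funext y; simp [Matrix.mul_apply]
          rw [h]
          exact DifferentiableAt.fun_sum fun l _ => (hWd i l).mul (hAdT β l j)) α,
      matPDeriv_mul (hGd β) hWd α,
      matPDeriv_mul hWd (hAdT β) α,
      matPDeriv_transpose (f := A β) α]
    rw [hlift α x hx]
  -- symmetry of second derivatives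
  have symm : matPDeriv μ (matPDeriv ν W) x = matPDeriv ν (matPDeriv μ W) x := by
    ext i j
    show fderiv ℝ (fun y => fderiv ℝ (fun z => W z i j) y (Pi.single ν 1)) x (Pi.single μ 1)
        = fderiv ℝ (fun y => fderiv ℝ (fun z => W z i j) y (Pi.single μ 1)) x (Pi.single ν 1)
    exact scalar_symm ((hWC2 i j).contDiffAt hxnhds) _ _
  have key := (step μ ν).symm.trans (symm.trans (step ν μ))
  simp only [Matrix.transpose_add, Matrix.transpose_sub, Matrix.transpose_mul] at key ⊢
  set PGμν := matPDeriv μ (G ν) x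
  set PGνμ := matPDeriv ν (G μ) x
  set QAμν := (matPDeriv μ (A ν) x)ᵀ
  set QAνμ := (matPDeriv ν (A μ) x)ᵀ
  set Wx := W x
  set Gμ := G μ x
  set Gν := G ν x
  set Aμ := (A μ x)ᵀ
  set Aν := (A ν x)ᵀ
  have h2 : (PGμν - PGνμ - (Gμ * Gν - Gν * Gμ)) * Wx
      - Wx * (QAμν - QAνμ + (Aν * Aμ - Aμ * Aν))
      = (PGμν * Wx + Gν * (Gμ * Wx - Wx * Aμ)
          - ((Gμ * Wx - Wx * Aμ) * Aν + Wx * QAμν))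
        - (PGνμ * Wx + Gμ * (Gν * Wx - Wx * Aν)
          - ((Gν * Wx - Wx * Aν) * Aμ + Wx * QAνμ)) := by
    simp only [Matrix.sub_mul, Matrix.add_mul, Matrix.mul_sub, Matrix.mul_add,
      Matrix.mul_assoc]
    abel
  rw [sub_eq_zero_of_eq key] at h2
  exact sub_eq_zero.mp h2
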